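/- The maps s ↦ ω₀(s) and s ↦ ω_∞(s), from the set of all sequences s = (s_k)_{k≥1} with s_k ∈ {Ũ, Ṽ} to one-sided infinite words over {a, b}, are both injective. In particular, the families {ω₀(s)} and {ω_∞(s)} are each uncountable. -/

import Mathlib

inductive AB
  | a
  | b

/-- The substitution χ on letters: both symbols of χ(a) = 22 are 2, both of χ(b) = 11 are 1. -/
def chiVal : AB → ℕ
  | AB.a => 2
  | AB.b => 1

/-- χ on finite words over {a, b}, producing a word over {1, 2}. -/
def chiW (w : List AB) : List ℕ :=
  w.flatMap (fun c => [chiVal c, chiVal c])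

/-- χ on one-sided infinite words over {a, b}. -/
def chiInf (w : ℕ → AB) : ℕ → ℕ := fun i => chiVal (w (i / 2))

/-- The pair operation Ũ(α, β) = (αββ, αβββ). -/
def Ut (p : List AB × List AB) : List AB × List AB :=
  (p.1 ++ p.2 ++ p.2, p.1 ++ p.2 ++ p.2 ++ p.2)

/-- The pair operation Ṽ(α, β) = (αβββ, αββββ). -/
def Vt (p : List AB × List AB) : List AB × List AB :=
  (p.1 ++ p.2 ++ p.2 ++ p.2, p.1 ++ p.2 ++ p.2 ++ p.2 ++ p.2)

/-- The sequence of pairs (αₙ(s), βₙ(s)) starting from (a, ab), applying Ũ (for `true`)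
or Ṽ (for `false`) at each step. -/
def pairSeqT (s : ℕ → Bool) : ℕ → List AB × List AB
  | 0 => ([AB.a], [AB.a, AB.b])
  | n + 1 => (if s n then Ut else Vt) (pairSeqT s n)

/-- `w` is the infinite word ω₀(s): every βₙ(s)ᵀ is a prefix of `w`. -/
def isOmega0 (s : ℕ → Bool) (w : ℕ → AB) : Prop :=
  ∀ n : ℕ, ∀ j : ℕ, j < (pairSeqT s n).2.length →
    w j = (pairSeqT s n).2.reverse.getD j AB.a

/-- `w` is the infinite word ω_∞(s): every αₙ(s)βₙ(s)βₙ(s) is a prefix of `w`. -/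
def isOmegaInf (s : ℕ → Bool) (w : ℕ → AB) : Prop :=
  ∀ n : ℕ, ∀ j : ℕ,
    j < ((pairSeqT s n).1 ++ (pairSeqT s n).2 ++ (pairSeqT s n).2).length →
    w j = ((pairSeqT s n).1 ++ (pairSeqT s n).2 ++ (pairSeqT s n).2).getD j AB.a

/-- All the structural facts we need about the pairs, simultaneously by induction. -/
lemma pair_facts (s : ℕ → Bool) (n : ℕ) :
    (pairSeqT s n).1.length < (pairSeqT s n).2.length ∧
    0 < (pairSeqT s n).1.length ∧
    (pairSeqT s n).2.getD ((pairSeqT s n).2.length - (pairSeqT s n).1.length - 1) AB.a = AB.a ∧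
    (pairSeqT s n).2.getD ((pairSeqT s n).2.length - (pairSeqT s n).1.length) AB.a = AB.b ∧
    (pairSeqT s n).2.getD ((pairSeqT s n).2.length - 1) AB.a = AB.b ∧
    (pairSeqT s n).2.getD 0 AB.a = AB.a ∧
    (pairSeqT s n).1.getD 0 AB.a = AB.a := by
  induction n with
  | zero => simp [pairSeqT, List.getD]
  | succ n ih =>
    obtain ⟨hAB, hA, ha, hb, hlast, hhead, hheadα⟩ := ih
    set α := (pairSeqT s n).1 with hα
    set β := (pairSeqT s n).2 with hβ
    set A := α.length
    set B := β.length
    have h1 : pairSeqT s (n+1) = (if s n then Ut else Vt) (α, β) := rfl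
    cases hsn : s n
    · -- Vt case
      rw [hsn] at h1; simp only [if_neg Bool.false_ne_true] at h1
      have h2 : (pairSeqT s (n+1)).2 = α ++ (β ++ (β ++ (β ++ β))) := by
        rw [h1]; simp [Vt]
      have h3 : (pairSeqT s (n+1)).1 = α ++ (β ++ (β ++ β)) := by
        rw [h1]; simp [Vt]
      have hl2 : (pairSeqT s (n+1)).2.length = A + 4 * B := by simp [h2]; ring
      have hl1 : (pairSeqT s (n+1)).1.length = A + 3 * B := by simp [h3]; ring
      refine ⟨by omega, by omega, ?_, ?_, ?_, ?_, ?_⟩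
      · rw [hl2, hl1, h2]
        have e1 : A + 4 * B - (A + 3 * B) - 1 = B - 1 := by omega
        rw [e1, List.getD_append_right _ _ _ _ (by omega),
          List.getD_append _ _ _ _ (by omega : B - 1 - A < B)]
        have : B - 1 - A = B - A - 1 := by omega
        rw [this]; exact ha
      · rw [hl2, hl1, h2]
        have e1 : A + 4 * B - (A + 3 * B) = B := by omega
        rw [e1, List.getD_append_right _ _ _ _ (by omega),
          List.getD_append _ _ _ _ (by omega : B - A < B)]
        exact hb
      · rw [hl2, h2]
        rw [List.getD_append_right _ _ _ _ (by omega),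
          List.getD_append_right _ _ _ _ (by omega : B ≤ A + 4 * B - 1 - A),
          List.getD_append_right _ _ _ _ (by omega : B ≤ A + 4 * B - 1 - A - B),
          List.getD_append_right _ _ _ _ (by omega : B ≤ A + 4 * B - 1 - A - B - B)]
        have : A + 4 * B - 1 - A - B - B - B = B - 1 := by omega
        rw [this]; exact hlast
      · rw [h2, List.getD_append _ _ _ _ (by omega), hheadα]
      · rw [h3, List.getD_append _ _ _ _ (by omega), hheadα]
    · -- Ut case
      rw [hsn] at h1; simp only [if_pos rfl] at h1
      have h2 : (pairSeqT s (n+1)).2 = α ++ (β ++ (β ++ β)) := by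
        rw [h1]; simp [Ut]
      have h3 : (pairSeqT s (n+1)).1 = α ++ (β ++ β) := by
        rw [h1]; simp [Ut]
      have hl2 : (pairSeqT s (n+1)).2.length = A + 3 * B := by simp [h2]; ring
      have hl1 : (pairSeqT s (n+1)).1.length = A + 2 * B := by simp [h3]; ring
      refine ⟨by omega, by omega, ?_, ?_, ?_, ?_, ?_⟩
      · rw [hl2, hl1, h2]
        have e1 : A + 3 * B - (A + 2 * B) - 1 = B - 1 := by omega
        rw [e1, List.getD_append_right _ _ _ _ (by omega),
          List.getD_append _ _ _ _ (by omega : B - 1 - A < B)]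
        have : B - 1 - A = B - A - 1 := by omega
        rw [this]; exact ha
      · rw [hl2, hl1, h2]
        have e1 : A + 3 * B - (A + 2 * B) = B := by omega
        rw [e1, List.getD_append_right _ _ _ _ (by omega),
          List.getD_append _ _ _ _ (by omega : B - A < B)]
        exact hb
      · rw [hl2, h2]
        rw [List.getD_append_right _ _ _ _ (by omega),
          List.getD_append_right _ _ _ _ (by omega : B ≤ A + 3 * B - 1 - A),
          List.getD_append_right _ _ _ _ (by omega : B ≤ A + 3 * B - 1 - A - B)]
        have : A + 3 * B - 1 - A - B - B = B - 1 := by omega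
        rw [this]; exact hlast
      · rw [h2, List.getD_append _ _ _ _ (by omega), hheadα]
      · rw [h3, List.getD_append _ _ _ _ (by omega), hheadα]

lemma pairSeqT_congr {s t : ℕ → Bool} {n : ℕ} (h : ∀ k < n, s k = t k) :
    pairSeqT s n = pairSeqT t n := by
  induction n with
  | zero => rfl
  | succ n ih =>
    have h1 : pairSeqT s n = pairSeqT t n := ih (fun k hk => h k (by omega))
    show (if s n then Ut else Vt) (pairSeqT s n) = (if t n then Ut else Vt) (pairSeqT t n)
    rw [h1, h n (by omega)]

lemma ab_ne : AB.a ≠ AB.b := by intro h; cases h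

/-- Key lemma for ω₀ : the words differ at position |α|+3|β|-1. -/
lemma omega0_ne {s t : ℕ → Bool} {n : ℕ} (hEq : pairSeqT s n = pairSeqT t n)
    (hs : s n = true) (ht : t n = false) {w w' : ℕ → AB}
    (hw : isOmega0 s w) (hw' : isOmega0 t w') : w ≠ w' := by
  obtain ⟨hAB, hA, -, hb, -, -, hheadα⟩ := pair_facts s n
  set α := (pairSeqT s n).1 with hα
  set β := (pairSeqT s n).2 with hβ
  set A := α.length
  set B := β.length
  have h2s : (pairSeqT s (n+1)).2 = α ++ (β ++ (β ++ β)) := by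
    show ((if s n then Ut else Vt) (pairSeqT s n)).2 = _
    rw [hs]; simp [Ut]; rfl
  have h2t : (pairSeqT t (n+1)).2 = α ++ (β ++ (β ++ (β ++ β))) := by
    show ((if t n then Ut else Vt) (pairSeqT t n)).2 = _
    rw [ht, ← hEq]; simp [Vt]; rfl
  have hls : (pairSeqT s (n+1)).2.length = A + 3 * B := by simp [h2s]; ring
  have hlt : (pairSeqT t (n+1)).2.length = A + 4 * B := by simp [h2t]; ring
  set j := A + 3 * B - 1 with hj
  have hjs : j < (pairSeqT s (n+1)).2.length := by omega
  have hjt : j < (pairSeqT t (n+1)).2.length := by omega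
  have hws : w j = AB.a := by
    rw [hw (n+1) j hjs]
    rw [List.getD_eq_getElem _ _ (by simpa using hjs), List.getElem_reverse,
      ← List.getD_eq_getElem _ AB.a]
    have e0 : (pairSeqT s (n+1)).2.length - 1 - j = 0 := by omega
    rw [e0, h2s]
    rw [List.getD_append _ _ _ _ (by omega), hheadα]
  have hwt : w' j = AB.b := by
    rw [hw' (n+1) j hjt]
    rw [List.getD_eq_getElem _ _ (by simpa using hjt), List.getElem_reverse,
      ← List.getD_eq_getElem _ AB.a]
    have : (pairSeqT t (n+1)).2.length - 1 - j = B := by omega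
    rw [this, h2t]
    rw [List.getD_append_right _ _ _ _ (by omega),
      List.getD_append _ _ _ _ (by omega : B - A < B), hb]
  intro h; rw [h, hwt] at hws; exact ab_ne hws.symm

/-- Key lemma for ω_∞ : the words differ at position |α|+3|β|-1. -/
lemma omegaInf_ne {s t : ℕ → Bool} {n : ℕ} (hEq : pairSeqT s n = pairSeqT t n)
    (hs : s n = true) (ht : t n = false) {w w' : ℕ → AB}
    (hw : isOmegaInf s w) (hw' : isOmegaInf t w') : w ≠ w' := by
  obtain ⟨hAB, hA, ha, -, hlast, -, -⟩ := pair_facts s n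
  set α := (pairSeqT s n).1 with hα
  set β := (pairSeqT s n).2 with hβ
  set A := α.length
  set B := β.length
  have h2s : (pairSeqT s (n+1)).2 = α ++ (β ++ (β ++ β)) := by
    show ((if s n then Ut else Vt) (pairSeqT s n)).2 = _
    rw [hs]; simp [Ut]; rfl
  have h1s : (pairSeqT s (n+1)).1 = α ++ (β ++ β) := by
    show ((if s n then Ut else Vt) (pairSeqT s n)).1 = _
    rw [hs]; simp [Ut]; rfl
  have h2t : (pairSeqT t (n+1)).2 = α ++ (β ++ (β ++ (β ++ β))) := by
    show ((if t n then Ut else Vt) (pairSeqT t n)).2 = _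
    rw [ht, ← hEq]; simp [Vt]; rfl
  have h1t : (pairSeqT t (n+1)).1 = α ++ (β ++ (β ++ β)) := by
    show ((if t n then Ut else Vt) (pairSeqT t n)).1 = _
    rw [ht, ← hEq]; simp [Vt]; rfl
  set j := A + 3 * B - 1 with hj
  have hjs : j < ((pairSeqT s (n+1)).1 ++ (pairSeqT s (n+1)).2 ++ (pairSeqT s (n+1)).2).length := by
    simp [h1s, h2s]; omega
  have hjt : j < ((pairSeqT t (n+1)).1 ++ (pairSeqT t (n+1)).2 ++ (pairSeqT t (n+1)).2).length := by
    simp [h1t, h2t]; omega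
  have hws : w j = AB.a := by
    rw [hw (n+1) j hjs]
    rw [List.append_assoc, List.getD_append_right _ _ _ _ (by simp [h1s]; omega)]
    have e1 : j - (pairSeqT s (n+1)).1.length = B - 1 := by
      simp [h1s]; omega
    rw [e1, List.getD_append _ _ _ _ (by simp [h2s]; omega), h2s]
    rw [List.getD_append_right _ _ _ _ (by omega),
      List.getD_append _ _ _ _ (by omega : B - 1 - A < B)]
    have : B - 1 - A = B - A - 1 := by omega
    rw [this]; exact ha
  have hwt : w' j = AB.b := by
    rw [hw' (n+1) j hjt]
    rw [List.append_assoc, List.getD_append _ _ _ _ (by simp [h1t]; omega), h1t]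
    rw [List.getD_append_right _ _ _ _ (by omega),
      List.getD_append_right _ _ _ _ (by omega : B ≤ j - A),
      List.getD_append_right _ _ _ _ (by omega : B ≤ j - A - B)]
    have : j - A - B - B = B - 1 := by omega
    rw [this]; exact hlast
  intro h; rw [h, hwt] at hws; exact ab_ne hws.symm

theorem statement_13 (f g : (ℕ → Bool) → ℕ → AB)
    (hf : ∀ s : ℕ → Bool, isOmega0 s (f s))
    (hg : ∀ s : ℕ → Bool, isOmegaInf s (g s)) :
    Function.Injective f ∧ Function.Injective g ∧
    ¬ (Set.range f).Countable ∧ ¬ (Set.range g).Countable := by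
  have key : ∀ (s t : ℕ → Bool), s ≠ t →
      (∃ n, pairSeqT s n = pairSeqT t n ∧ s n = true ∧ t n = false) ∨
      (∃ n, pairSeqT t n = pairSeqT s n ∧ t n = true ∧ s n = false) := by
    intro s t hst
    have hex : ∃ n, s n ≠ t n := by
      by_contra h
      push_neg at h
      exact hst (funext h)
    classical
    let n := Nat.find hex
    have hn : s n ≠ t n := Nat.find_spec hex
    have hmin : ∀ k < n, s k = t k := fun k hk => by
      by_contra h; exact Nat.find_min hex hk h
    have hEq : pairSeqT s n = pairSeqT t n := pairSeqT_congr hmin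
    cases hsn : s n <;> cases htn : t n
    · rw [hsn, htn] at hn; exact absurd rfl hn
    · exact Or.inr ⟨n, hEq.symm, htn, hsn⟩
    · exact Or.inl ⟨n, hEq, hsn, htn⟩
    · rw [hsn, htn] at hn; exact absurd rfl hn
  have hfi : Function.Injective f := by
    intro s t h
    by_contra hst
    rcases key s t hst with ⟨n, hEq, hs, ht⟩ | ⟨n, hEq, hs, ht⟩
    · exact omega0_ne hEq hs ht (hf s) (hf t) h
    · exact omega0_ne hEq hs ht (hf t) (hf s) h.symm
  have hgi : Function.Injective g := by
    intro s t h
    by_contra hst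
    rcases key s t hst with ⟨n, hEq, hs, ht⟩ | ⟨n, hEq, hs, ht⟩
    · exact omegaInf_ne hEq hs ht (hg s) (hg t) h
    · exact omegaInf_ne hEq hs ht (hg t) (hg s) h.symm
  have huncount : ¬ Countable (ℕ → Bool) := by
    intro h
    have hc : Countable (Set ℕ) :=
      (Equiv.arrowCongr (Equiv.refl ℕ) (Equiv.propEquivBool)).countable_iff.mpr h
    obtain ⟨F, hF⟩ := exists_injective_nat (Set ℕ)
    exact Function.cantor_injective F hF
  refine ⟨hfi, hgi, ?_, ?_⟩
  · intro hc
    have : Countable (Set.range f) := hc.to_subtype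
    exact huncount ((Equiv.ofInjective f hfi).countable_iff.mpr this)
  · intro hc
    have : Countable (Set.range g) := hc.to_subtype
    exact huncount ((Equiv.ofInjective g hgi).countable_iff.mpr this)
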